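/- There exists η₂ > 0 such that for every fluid model (y, x) and Lebesgue-almost every t ≥ 0 with x(t) = -λ/β and y(t) ≥ γλ/ε, the function s ↦ ‖(y(s), x(s))‖_* is differentiable at t and its derivative at t is at most -η₂. -/

import Mathlib

noncomputable def nu1 (β γ ε : ℝ) : ℝ := (γ * β - Real.sqrt (γ^2 * β^2 - 4 * ε * β)) / 2
noncomputable def nu2 (β γ ε : ℝ) : ℝ := (γ * β + Real.sqrt (γ^2 * β^2 - 4 * ε * β)) / 2

/-- The norm `‖u‖_*`: the Euclidean norm of the coordinates of `u` in the
eigenvector basis `v₁ = (β/ν₁, -1)`, `v₂ = (β/ν₂, -1)`. -/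
noncomputable def starNorm (β γ ε : ℝ) (u : ℝ × ℝ) : ℝ :=
  let a1 := β / nu1 β γ ε
  let a2 := β / nu2 β γ ε
  let α1 := (u.1 + a2 * u.2) / (a1 - a2)
  let α2 := -u.2 - α1
  Real.sqrt (α1 ^ 2 + α2 ^ 2)
open MeasureTheory Set Filter

/-- A fluid model: locally Lipschitz pair `(y, x)` on `[0,∞)` with `x ≥ -λ/β`,
satisfying the fluid ODE a.e. on `[0,∞)`. -/
def IsFluidModel (β γ ε lam : ℝ) (y x : ℝ → ℝ) : Prop :=
  (∀ T : ℝ, 0 < T → ∃ K : NNReal,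
      LipschitzOnWith K y (Set.Icc 0 T) ∧ LipschitzOnWith K x (Set.Icc 0 T)) ∧
  (∀ t : ℝ, 0 ≤ t → -lam / β ≤ x t) ∧
  (∀ᵐ t ∂(volume.restrict (Set.Ici (0 : ℝ))),
    ∃ y' x' : ℝ, HasDerivAt y y' t ∧ HasDerivAt x x' t ∧
      (-lam / β < x t → y' = β * x t ∧ x' = -(γ * β * x t) - ε * y t) ∧
      (x t = -lam / β → y' = -lam ∧ x' = max (γ * lam - ε * y t) 0))

set_option maxHeartbeats 1000000 in
/-- Lemma 4.2(ii): on the boundary (with `y ≥ γλ/ε`), the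
`‖·‖_*`-norm of a fluid model decreases at least at a constant rate. -/
theorem stmt_3 (β γ ε lam : ℝ) (hβ : 0 < β) (hγ : 0 < γ) (hε : 0 < ε)
    (hεbound : ε < γ ^ 2 * β / 4) (hlam : 0 < lam) :
    ∃ η₂ : ℝ, 0 < η₂ ∧
      ∀ y x : ℝ → ℝ, IsFluidModel β γ ε lam y x →
        ∀ᵐ t ∂(volume.restrict (Set.Ici (0 : ℝ))),
          (x t = -lam / β ∧ γ * lam / ε ≤ y t) →
            ∃ d : ℝ, HasDerivAt (fun s => starNorm β γ ε (y s, x s)) d t ∧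
              d ≤ -η₂ := by
  have hdisc : 0 < γ^2 * β^2 - 4 * ε * β := by nlinarith
  set r := Real.sqrt (γ^2 * β^2 - 4 * ε * β) with hrdef
  have hr2 : r^2 = γ^2 * β^2 - 4 * ε * β := Real.sq_sqrt hdisc.le
  have hrpos : 0 < r := Real.sqrt_pos.mpr hdisc
  have hrlt : r < γ * β := by nlinarith [mul_pos hε hβ, mul_pos hγ hβ]
  have hν1pos : 0 < nu1 β γ ε := by unfold nu1; rw [← hrdef]; linarith
  have hν2pos : 0 < nu2 β γ ε := by unfold nu2; rw [← hrdef]; linarith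
  have hν12 : nu1 β γ ε < nu2 β γ ε := by unfold nu1 nu2; rw [← hrdef]; linarith
  have hsum12 : nu1 β γ ε + nu2 β γ ε = γ * β := by unfold nu1 nu2; rw [← hrdef]; ring
  have hprod : nu1 β γ ε * nu2 β γ ε = ε * β := by
    unfold nu1 nu2; rw [← hrdef]; linear_combination (-1/4 : ℝ) * hr2
  set a1 := β / nu1 β γ ε with ha1
  set a2 := β / nu2 β γ ε with ha2
  have ha1pos : 0 < a1 := div_pos hβ hν1pos
  have ha2pos : 0 < a2 := div_pos hβ hν2pos
  have hDpos : 0 < a1 - a2 := by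
    have : a2 < a1 := div_lt_div_of_pos_left hβ hν1pos hν12
    linarith
  have hsum : a1 + a2 = γ * β / ε := by
    rw [ha1, ha2]
    field_simp
    linear_combination ε * hsum12 - γ * hprod
  set m := lam / β with hmdef
  have hmpos : 0 < m := div_pos hlam hβ
  set t0 := lam * γ / (ε * (a1 - a2)) with ht0def
  have ht0pos : 0 < t0 := div_pos (mul_pos hlam hγ) (mul_pos hε hDpos)
  set N0 := Real.sqrt (t0^2 + m^2) with hN0def
  have hN0pos : 0 < N0 := Real.sqrt_pos.mpr (by positivity)
  set η₂ := lam * t0 * Real.sqrt 2 / ((a1 - a2) * N0) with hetadef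
  have hηpos : 0 < η₂ := by
    apply div_pos
    · exact mul_pos (mul_pos hlam ht0pos) (Real.sqrt_pos.mpr two_pos)
    · exact mul_pos hDpos hN0pos
  clear_value r a1 a2 m t0 N0 η₂
  refine ⟨η₂, hηpos, ?_⟩
  intro y x hfm
  filter_upwards [hfm.2.2] with t ht
  rintro ⟨hx, hy⟩
  obtain ⟨y', x', hdy, hdx, -, hbd⟩ := ht
  obtain ⟨hy', hx'⟩ := hbd hx
  subst hy'
  have hx0 : x' = 0 := by
    rw [hx']
    apply max_eq_right
    have h1 : γ * lam ≤ y t * ε := (div_le_iff₀ hε).mp hy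
    linarith [h1]
  subst hx0
  -- the two coordinate functions
  have hA : HasDerivAt (fun s => (y s + a2 * x s) / (a1 - a2))
      ((-lam + a2 * 0) / (a1 - a2)) t := (hdy.add (hdx.const_mul a2)).div_const _
  have hB : HasDerivAt (fun s => -(x s) - (y s + a2 * x s) / (a1 - a2))
      (-0 - (-lam + a2 * 0) / (a1 - a2)) t := hdx.neg.sub hA
  set At := (y t + a2 * x t) / (a1 - a2) with hAtdef
  set Bt := -(x t) - (y t + a2 * x t) / (a1 - a2) with hBtdef
  have hABm : At + Bt = m := by rw [hAtdef, hBtdef, hx, hmdef]; ring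
  have hfpos : 0 < At^2 + Bt^2 := by
    have h2 : (At + Bt)^2 = m^2 := by rw [hABm]
    linarith [h2, sq_nonneg (At - Bt), mul_pos hmpos hmpos]
  have hf : HasDerivAt
      (fun s => ((y s + a2 * x s) / (a1 - a2))^2 + (-(x s) - (y s + a2 * x s) / (a1 - a2))^2)
      ((2:ℕ) * At ^ (2-1) * ((-lam + a2 * 0) / (a1 - a2))
        + (2:ℕ) * Bt ^ (2-1) * (-0 - (-lam + a2 * 0) / (a1 - a2))) t :=
    (hA.pow 2).add (hB.pow 2)
  have hsqrt := hf.sqrt (ne_of_gt hfpos)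
  have hfun : (fun s => starNorm β γ ε (y s, x s))
      = (fun s => Real.sqrt (((y s + a2 * x s) / (a1 - a2))^2
          + (-(x s) - (y s + a2 * x s) / (a1 - a2))^2)) := by
    funext s
    simp only [starNorm, ← ha1, ← ha2]
  have hDne : a1 - a2 ≠ 0 := ne_of_gt hDpos
  set S := Real.sqrt (At^2 + Bt^2) with hSdef
  have hSpos : 0 < S := Real.sqrt_pos.mpr hfpos
  clear_value At Bt S
  -- lower bound on At
  have ha1e : a1 = γ * β / ε - a2 := by linarith
  have h1 : lam * a1 / β ≤ y t + a2 * x t := by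
    have e : lam * a1 / β = γ * lam / ε + a2 * (-lam / β) := by
      rw [ha1e]; field_simp; ring
    rw [hx, e]
    linarith
  have hAtlb : lam * a1 / β / (a1 - a2) ≤ At := by
    rw [hAtdef]
    exact (div_le_div_iff_of_pos_right hDpos).mpr h1
  have hBtm : Bt = m - At := by linarith
  have e2 : 2 * (lam * a1 / β / (a1 - a2)) - m = t0 := by
    rw [ht0def, hmdef]
    field_simp
    have h8 : (2 * (lam * a1) * β - β * (a1 - a2) * lam) * (ε * (a1 - a2))
        = lam * β * ε * (a1 - a2) * (a1 + a2) := by ring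
    have h9 : lam * γ * (β * (a1 - a2) * β) = lam * β * ε * (a1 - a2) * (γ * β / ε) := by
      field_simp
    rw [show 2 * a1 - (a1 - a2) = a1 + a2 by ring, hsum, div_mul_cancel₀ _ hε.ne']; ring
  have httlb : t0 ≤ At - Bt := by linarith
  have httpos : 0 < At - Bt := lt_of_lt_of_le ht0pos httlb
  -- sqrt manipulations
  have hSeq : Real.sqrt 2 * S = Real.sqrt ((At - Bt)^2 + m^2) := by
    rw [hSdef, ← Real.sqrt_mul (by norm_num : (0:ℝ) ≤ 2)]
    congr 1
    rw [← hABm]; ring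
  have step : t0 * (Real.sqrt 2 * S) ≤ (At - Bt) * N0 := by
    rw [hSeq, hN0def]
    have e3 : t0 * Real.sqrt ((At - Bt)^2 + m^2)
        = Real.sqrt (t0^2 * ((At - Bt)^2 + m^2)) := by
      rw [Real.sqrt_mul (sq_nonneg t0), Real.sqrt_sq ht0pos.le]
    have e4 : (At - Bt) * Real.sqrt (t0^2 + m^2)
        = Real.sqrt ((At - Bt)^2 * (t0^2 + m^2)) := by
      rw [Real.sqrt_mul (sq_nonneg _), Real.sqrt_sq httpos.le]
    rw [e3, e4]
    apply Real.sqrt_le_sqrt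
    have hsq : t0^2 ≤ (At - Bt)^2 := pow_le_pow_left₀ ht0pos.le httlb 2
    have hmul : 0 ≤ ((At - Bt)^2 - t0^2) * m^2 :=
      mul_nonneg (by linarith) (sq_nonneg m)
    linarith [hmul]
  have hbound : (((2:ℕ):ℝ) * At ^ (2 - 1) * ((-lam + a2 * 0) / (a1 - a2))
      + ((2:ℕ):ℝ) * Bt ^ (2 - 1) * (-0 - (-lam + a2 * 0) / (a1 - a2))) / (2 * S) ≤ -η₂ := by
    have hnum : ((2:ℕ):ℝ) * At ^ (2 - 1) * ((-lam + a2 * 0) / (a1 - a2))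
        + ((2:ℕ):ℝ) * Bt ^ (2 - 1) * (-0 - (-lam + a2 * 0) / (a1 - a2))
        = -(2 * lam * (At - Bt) / (a1 - a2)) := by
      push_cast
      field_simp
      ring
    rw [hnum, div_le_iff₀ (by linarith : (0:ℝ) < 2 * S)]
    have final : η₂ * (2 * S) ≤ 2 * lam * (At - Bt) / (a1 - a2) := by
      have e5 : η₂ * (2 * S) = 2 * lam * (t0 * (Real.sqrt 2 * S)) / ((a1 - a2) * N0) := by
        rw [hetadef]; ring
      have e6 : 2 * lam * ((At - Bt) * N0) / ((a1 - a2) * N0)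
          = 2 * lam * (At - Bt) / (a1 - a2) := by
        rw [div_eq_div_iff (mul_pos hDpos hN0pos).ne' hDne]
        ring
      have mono : 2 * lam * (t0 * (Real.sqrt 2 * S)) / ((a1 - a2) * N0)
          ≤ 2 * lam * ((At - Bt) * N0) / ((a1 - a2) * N0) := by
        apply (div_le_div_iff_of_pos_right (mul_pos hDpos hN0pos)).mpr
        exact (mul_le_mul_iff_of_pos_left (mul_pos two_pos hlam)).mpr step
      rw [e5, ← e6]
      exact mono
    have : -(2 * lam * (At - Bt) / (a1 - a2)) ≤ -(η₂ * (2 * S)) := by linarith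
    calc -(2 * lam * (At - Bt) / (a1 - a2))
        ≤ -(η₂ * (2 * S)) := this
      _ = -η₂ * (2 * S) := by ring
  refine ⟨_, ?_, hbound⟩
  rw [hfun]
  exact hsqrt
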